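/- arXiv:2101.09089 — 4 statements merged into one kernel-verified Lean document; each statement's English description precedes it below -/
import Mathlib

section
/- For any natural numbers m, q, n with n ≥ q, any p with 0 ≤ p ≤ m, and sequences a_{(1)},...,a_{(m)} defined on [q, n+1], R_{m,q,n+1} = Σ_{k=p+1}^{m} (Π_{j=0}^{m-k-1} a_{(m-j)}(n+1)) R_{k,q,n} + (Π_{j=0}^{m-p-1} a_{(m-j)}(n+1)) R_{p,q,n+1}. -/
/-- Recurrent sum: `recSum a q m n = Σ_{q ≤ N_1 ≤ ⋯ ≤ N_m ≤ n} a m N_m ⋯ a 1 N_1`,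
with `recSum a q 0 n = 1`. -/
def recSum (a : ℕ → ℕ → ℝ) (q : ℕ) : ℕ → ℕ → ℝ
  | 0, _ => 1
  | m + 1, n => ∑ N ∈ Finset.Icc q n, a (m + 1) N * recSum a q m N

lemma recSum_succ_top (a : ℕ → ℕ → ℝ) (q m n : ℕ) (hqn : q ≤ n) :
    recSum a q (m + 1) (n + 1)
      = recSum a q (m + 1) n + a (m + 1) (n + 1) * recSum a q m (n + 1) := by
  show (∑ N ∈ Finset.Icc q (n + 1), a (m + 1) N * recSum a q m N) = _
  rw [Finset.sum_Icc_succ_top (by omega)]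
  rfl

theorem stmt_3 (m q n p : ℕ) (hqn : q ≤ n) (hpm : p ≤ m) (a : ℕ → ℕ → ℝ) :
    recSum a q m (n + 1)
      = (∑ k ∈ Finset.Icc (p + 1) m,
          (∏ j ∈ Finset.range (m - k), a (m - j) (n + 1)) * recSum a q k n)
        + (∏ j ∈ Finset.range (m - p), a (m - j) (n + 1)) * recSum a q p (n + 1) := by
  obtain ⟨d, hd⟩ : ∃ d, p + d = m := ⟨m - p, by omega⟩
  clear hpm
  induction d generalizing p with
  | zero =>
      subst hd
      simp
  | succ d ih =>
      have h1 : p + 1 + d = m := by omega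
      have key := ih (p + 1) h1
      have hsplit := recSum_succ_top a q p n hqn
      have hprod : (∏ j ∈ Finset.range (m - p), a (m - j) (n + 1))
          = (∏ j ∈ Finset.range (m - (p + 1)), a (m - j) (n + 1)) * a (p + 1) (n + 1) := by
        have : m - p = (m - (p + 1)) + 1 := by omega
        rw [this, Finset.prod_range_succ]
        congr 2
        omega
      have hIcc : (∑ k ∈ Finset.Icc (p + 1) m,
            (∏ j ∈ Finset.range (m - k), a (m - j) (n + 1)) * recSum a q k n)
          = (∏ j ∈ Finset.range (m - (p + 1)), a (m - j) (n + 1)) * recSum a q (p + 1) n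
            + ∑ k ∈ Finset.Icc (p + 2) m,
                (∏ j ∈ Finset.range (m - k), a (m - j) (n + 1)) * recSum a q k n := by
        have : Finset.Icc (p + 1) m = insert (p + 1) (Finset.Icc (p + 2) m) := by
          ext x; simp; omega
        rw [this, Finset.sum_insert (by simp)]
      rw [key, hsplit, hIcc, hprod]
      ring
end

section
/- Let (φ_1,...,φ_m) be non-negative integers with Σ_{i=1}^{m} i·φ_i = r ≤ m. Then Σ over all tuples (y_1,...,y_m) of non-negative integers with Σ i·y_i = m of Π_{i=1}^{m} C(y_i, φ_i)/(i^{y_i} · y_i!) equals Π_{i=1}^{m} 1/(i^{φ_i} · φ_i!). -/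
open Finset

/-- The finset of multiplicity vectors `y : Fin m → ℕ` with `∑ (i+1) y i = n`. -/
private def Tset (m n : ℕ) : Finset (Fin m → ℕ) :=
  (Fintype.piFinset fun _ => Finset.range (n + 1)).filter fun y => ∑ i, (i.1 + 1) * y i = n

private lemma mem_Tset {m n : ℕ} {y : Fin m → ℕ} :
    y ∈ Tset m n ↔ ∑ i, (i.1 + 1) * y i = n := by
  constructor
  · exact fun h => (Finset.mem_filter.mp h).2
  · intro h
    refine Finset.mem_filter.mpr ⟨Fintype.mem_piFinset.mpr fun i => ?_, h⟩
    rw [Finset.mem_range]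
    have h1 : (i.1 + 1) * y i ≤ n := h ▸
      Finset.single_le_sum (f := fun i : Fin m => (i.1 + 1) * y i)
        (fun _ _ => Nat.zero_le _) (Finset.mem_univ i)
    nlinarith [Nat.le_mul_of_pos_left (y i) (Nat.succ_pos i.1)]

private lemma sum_split {m : ℕ} (f : Fin m → ℕ) (i : Fin m) :
    ∑ j, (j.1 + 1) * f j = (i.1 + 1) * f i + ∑ j ∈ Finset.univ.erase i, (j.1 + 1) * f j :=
  (Finset.add_sum_erase _ _ (Finset.mem_univ i)).symm

/-- Key identity: `∑_{∑(i+1)y_i = n} ∏ 1/((i+1)^{y_i} y_i!) = 1` for `n ≤ m`. -/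
private lemma key (m : ℕ) : ∀ n, n ≤ m →
    ∑ y ∈ Tset m n, ∏ i : Fin m,
      (1 : ℝ) / ((i.1 + 1 : ℝ) ^ (y i) * (Nat.factorial (y i) : ℝ)) = 1 := by
  intro n
  induction n using Nat.strong_induction_on with
  | _ n ih =>
    intro hnm
    rcases Nat.eq_zero_or_pos n with h0 | hpos
    · subst h0
      have hT : Tset m 0 = {fun _ => 0} := by
        ext y
        simp only [mem_Tset, Finset.mem_singleton]
        constructor
        · intro h
          funext i
          have := (Finset.sum_eq_zero_iff.mp h) i (Finset.mem_univ i)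
          rcases Nat.mul_eq_zero.mp this with h' | h' <;> omega
        · intro h; subst h; simp
      simp [hT]
    · -- inner sums: removing one part of size i+1
      have key2 : ∀ i : Fin m,
          ∑ y ∈ Tset m n, ((i.1 + 1) * y i : ℝ) *
            ∏ j : Fin m, (1 : ℝ) / ((j.1 + 1 : ℝ) ^ (y j) * (Nat.factorial (y j) : ℝ))
            = if i.1 + 1 ≤ n then 1 else 0 := by
        intro i
        rw [← Finset.sum_filter_of_ne (p := fun y => y i ≠ 0)
          (by intro y _ hy; intro h; apply hy; simp [h])]
        by_cases hin : i.1 + 1 ≤ n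
        · rw [if_pos hin]
          refine Eq.trans (Finset.sum_nbij' (fun y => Function.update y i (y i - 1))
            (fun z => Function.update z i (z i + 1)) ?_ ?_ ?_ ?_ ?_)
            (ih (n - (i.1 + 1)) (by omega) (by omega))
          · intro y hy
            beta_reduce
            rw [Finset.mem_filter, mem_Tset] at hy
            obtain ⟨hy1, hy2⟩ := hy
            rw [mem_Tset, sum_split _ i, Function.update_self,
              Finset.sum_congr rfl (fun j hj =>
                by rw [Function.update_of_ne (Finset.mem_erase.mp hj).1])]
            rw [sum_split _ i] at hy1
            obtain ⟨t, ht⟩ : ∃ t, y i = t + 1 := ⟨y i - 1, by omega⟩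
            rw [ht] at hy1 ⊢
            rw [Nat.mul_succ] at hy1
            simp only [Nat.add_sub_cancel]
            omega
          · intro z hz
            beta_reduce
            rw [mem_Tset] at hz
            rw [Finset.mem_filter, mem_Tset, sum_split _ i, Function.update_self,
              Finset.sum_congr rfl (fun j hj =>
                by rw [Function.update_of_ne (Finset.mem_erase.mp hj).1])]
            rw [sum_split _ i] at hz
            constructor
            · rw [Nat.mul_succ]
              omega
            · simp
          · intro y hy
            beta_reduce
            rw [Finset.mem_filter] at hy
            have : y i ≠ 0 := hy.2
            funext j
            beta_reduce
            rcases eq_or_ne j i with rfl | hj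
            · simp; omega
            · simp [Function.update_of_ne hj]
          · intro z _
            beta_reduce
            funext j
            beta_reduce
            rcases eq_or_ne j i with rfl | hj
            · simp
            · simp [Function.update_of_ne hj]
          · intro y hy
            beta_reduce
            rw [Finset.mem_filter] at hy
            have hyi : y i ≠ 0 := hy.2
            have hR : ∏ j : Fin m, (1:ℝ) / ((j.1+1:ℝ) ^ (Function.update y i (y i - 1) j)
                  * (Nat.factorial (Function.update y i (y i - 1) j) : ℝ))
                = (1:ℝ) / ((i.1+1:ℝ) ^ (y i - 1) * (Nat.factorial (y i - 1) : ℝ)) *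
                  ∏ j ∈ Finset.univ.erase i,
                    (1:ℝ) / ((j.1+1:ℝ) ^ (y j) * (Nat.factorial (y j) : ℝ)) := by
              rw [← Finset.mul_prod_erase _ _ (Finset.mem_univ i), Function.update_self]
              congr 1
              refine Finset.prod_congr rfl (fun j hj => ?_)
              rw [Function.update_of_ne (Finset.mem_erase.mp hj).1]
            rw [hR, ← Finset.mul_prod_erase _ _ (Finset.mem_univ i), ← mul_assoc]
            congr 1
            obtain ⟨t, ht⟩ : ∃ t, y i = t + 1 := ⟨y i - 1, by omega⟩
            rw [ht]
            simp only [Nat.add_sub_cancel]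
            have hfac : (Nat.factorial (t + 1) : ℝ) = (t + 1) * Nat.factorial t := by
              rw [Nat.factorial_succ]; push_cast; ring
            have h1 : (i.1 + 1 : ℝ) ≠ 0 := by positivity
            have h2 : ((Nat.factorial t : ℝ)) ≠ 0 := by
              exact_mod_cast (Nat.factorial_pos t).ne'
            have h3 : (i.1 + 1 : ℝ) ^ t ≠ 0 := pow_ne_zero _ h1
            rw [pow_succ, hfac]
            field_simp
            push_cast
            ring
        · rw [if_neg hin]
          have hemp : (Tset m n).filter (fun y => y i ≠ 0) = ∅ := by
            rw [Finset.eq_empty_iff_forall_notMem]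
            intro y hy
            rw [Finset.mem_filter, mem_Tset] at hy
            obtain ⟨h1, h2⟩ := hy
            rw [sum_split _ i] at h1
            have : i.1 + 1 ≤ (i.1 + 1) * y i := Nat.le_mul_of_pos_right _ (by omega)
            omega
          rw [hemp, Finset.sum_empty]
      -- multiply both sides by n
      have hmain : (n : ℝ) * ∑ y ∈ Tset m n, ∏ i : Fin m,
          (1 : ℝ) / ((i.1 + 1 : ℝ) ^ (y i) * (Nat.factorial (y i) : ℝ)) = n := by
        rw [Finset.mul_sum]
        have step : ∀ y ∈ Tset m n, (n : ℝ) *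
            ∏ i : Fin m, (1 : ℝ) / ((i.1 + 1 : ℝ) ^ (y i) * (Nat.factorial (y i) : ℝ))
            = ∑ i : Fin m, ((i.1 + 1) * y i : ℝ) *
              ∏ j : Fin m, (1 : ℝ) / ((j.1 + 1 : ℝ) ^ (y j) * (Nat.factorial (y j) : ℝ)) := by
          intro y hy
          rw [mem_Tset] at hy
          rw [← Finset.sum_mul]
          congr 1
          rw [← hy]
          push_cast
          ring
        rw [Finset.sum_congr rfl step, Finset.sum_comm]
        rw [Finset.sum_congr rfl (fun i _ => key2 i)]
        rw [Fin.sum_univ_eq_sum_range (fun i => if i + 1 ≤ n then (1:ℝ) else 0) m,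
          Finset.sum_boole]
        have hfil : (Finset.range m).filter (fun i => i + 1 ≤ n) = Finset.range n := by
          ext x
          simp only [Finset.mem_filter, Finset.mem_range]
          omega
        rw [hfil, Finset.card_range]
      have hn : (n : ℝ) ≠ 0 := by exact_mod_cast hpos.ne'
      exact mul_left_cancel₀ hn (hmain.trans (mul_one (n : ℝ)).symm)

theorem stmt_11 (m r : ℕ) (φ : Fin m → ℕ)
    (hφ : ∑ i, (i.1 + 1) * φ i = r) (hrm : r ≤ m) :
    ∑ᶠ y ∈ {y : Fin m → ℕ | ∑ i, (i.1 + 1) * y i = m},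
        ∏ i : Fin m,
          ((y i).choose (φ i) : ℝ) / ((i.1 + 1 : ℝ) ^ (y i) * (Nat.factorial (y i) : ℝ))
      = ∏ i : Fin m,
          (1 : ℝ) / ((i.1 + 1 : ℝ) ^ (φ i) * (Nat.factorial (φ i) : ℝ)) := by
  classical
  have hset : {y : Fin m → ℕ | ∑ i, (i.1 + 1) * y i = m} = ↑(Tset m m) := by
    ext y
    simp only [Set.mem_setOf_eq, Finset.mem_coe, mem_Tset]
  rw [hset, finsum_mem_coe_finset]
  rw [← Finset.sum_filter_of_ne (p := fun y => ∀ i, φ i ≤ y i) (by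
    intro y _ hfy
    by_contra hc
    push_neg at hc
    obtain ⟨i, hi⟩ := hc
    apply hfy
    apply Finset.prod_eq_zero (Finset.mem_univ i)
    rw [Nat.choose_eq_zero_of_lt hi]
    simp)]
  have hbij : ∑ y ∈ (Tset m m).filter (fun y => ∀ i, φ i ≤ y i),
      ∏ i : Fin m,
        ((y i).choose (φ i) : ℝ) / ((i.1 + 1 : ℝ) ^ (y i) * (Nat.factorial (y i) : ℝ))
      = ∑ z ∈ Tset m (m - r),
      ∏ i : Fin m,
        ((1 : ℝ) / ((i.1 + 1 : ℝ) ^ (φ i) * (Nat.factorial (φ i) : ℝ))) *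
          ((1 : ℝ) / ((i.1 + 1 : ℝ) ^ (z i) * (Nat.factorial (z i) : ℝ))) := by
    refine Finset.sum_nbij' (fun y => fun i => y i - φ i) (fun z => fun i => z i + φ i)
      ?_ ?_ ?_ ?_ ?_
    · intro y hy
      rw [Finset.mem_filter, mem_Tset] at hy
      rw [mem_Tset]
      beta_reduce
      have hsum : ∑ i, (i.1 + 1) * (y i - φ i) + ∑ i, (i.1 + 1) * φ i
          = ∑ i, (i.1 + 1) * y i := by
        rw [← Finset.sum_add_distrib]
        refine Finset.sum_congr rfl fun i _ => ?_
        have := hy.2 i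
        rw [← Nat.mul_add, Nat.sub_add_cancel this]
      omega
    · intro z hz
      rw [mem_Tset] at hz
      rw [Finset.mem_filter, mem_Tset]
      beta_reduce
      constructor
      · have hsum : ∑ i, (i.1 + 1) * (z i + φ i)
            = ∑ i, (i.1 + 1) * z i + ∑ i, (i.1 + 1) * φ i := by
          rw [← Finset.sum_add_distrib]
          exact Finset.sum_congr rfl fun i _ => Nat.mul_add _ _ _
        rw [hsum, hz, hφ]
        omega
      · intro i
        omega
    · intro y hy
      rw [Finset.mem_filter] at hy
      funext i
      have := hy.2 i
      simp only
      omega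
    · intro z _
      funext i
      simp only
      omega
    · intro y hy
      beta_reduce
      rw [Finset.mem_filter] at hy
      refine Finset.prod_congr rfl fun i _ => ?_
      have hle := hy.2 i
      obtain ⟨t, ht⟩ : ∃ t, y i = t + φ i := ⟨y i - φ i, by omega⟩
      rw [ht]
      simp only [Nat.add_sub_cancel]
      have h := Nat.add_choose_mul_factorial_mul_factorial t (φ i)
      have hc : ((t + φ i).choose (φ i) : ℝ) * (Nat.factorial t : ℝ) *
          (Nat.factorial (φ i) : ℝ) = ((t + φ i).factorial : ℝ) := by
        exact_mod_cast congrArg (Nat.cast (R := ℝ)) h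
      have h1 : (i.1 + 1 : ℝ) ≠ 0 := by positivity
      have h2 : (Nat.factorial t : ℝ) ≠ 0 := by exact_mod_cast (Nat.factorial_pos t).ne'
      have h3 : (Nat.factorial (φ i) : ℝ) ≠ 0 := by
        exact_mod_cast (Nat.factorial_pos (φ i)).ne'
      have h4 : (Nat.factorial (t + φ i) : ℝ) ≠ 0 := by
        exact_mod_cast (Nat.factorial_pos (t + φ i)).ne'
      rw [pow_add]
      field_simp
      linear_combination hc
  rw [hbij,
    Finset.sum_congr rfl (fun z _ => Finset.prod_mul_distrib
      (f := fun i : Fin m => (1 : ℝ) / ((i.1 + 1 : ℝ) ^ (φ i) * (Nat.factorial (φ i) : ℝ)))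
      (g := fun i : Fin m => (1 : ℝ) / ((i.1 + 1 : ℝ) ^ (z i) * (Nat.factorial (z i) : ℝ)))),
    ← Finset.mul_sum, key m (m - r) (by omega), mul_one]
end

section
/- For any natural numbers m and n, Σ over all tuples (y_1,...,y_m) of non-negative integers with Σ_{i=1}^m i·y_i = m of Π_{i=1}^{m} (1/y_i!) · (n/i)^{y_i} = C(n+m-1, m). -/
open Finset

noncomputable def g13 (n i y : ℕ) : ℝ :=
  (1 / (Nat.factorial y : ℝ)) * ((n : ℝ) / ((i : ℝ) + 1)) ^ y

def B13 (M k : ℕ) : Finset (Fin M → ℕ) :=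
  (Fintype.piFinset fun _ => Finset.range (k + 1)).filter
    (fun y => ∑ i, (i.1 + 1) * y i = k)

lemma mem_B13 {M k : ℕ} {y : Fin M → ℕ} :
    y ∈ B13 M k ↔ ∑ i, (i.1 + 1) * y i = k := by
  simp only [B13, mem_filter, Fintype.mem_piFinset, mem_range, and_iff_right_iff_imp]
  intro h i
  have h1 : (i.1 + 1) * y i ≤ k := h ▸ Finset.single_le_sum
    (f := fun j => (j.1 + 1) * y j) (fun _ _ => Nat.zero_le _) (mem_univ i)
  have h2 : y i ≤ (i.1 + 1) * y i := Nat.le_mul_of_pos_left _ (Nat.succ_pos _)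
  omega

noncomputable def S13 (n M k : ℕ) : ℝ := ∑ y ∈ B13 M k, ∏ i, g13 n i.1 (y i)

lemma g13_zero (n i : ℕ) : g13 n i 0 = 1 := by simp [g13]

lemma g13_step (n i y : ℕ) (hy : y ≠ 0) :
    ((i : ℝ) + 1) * y * g13 n i y = n * g13 n i (y - 1) := by
  obtain ⟨y, rfl⟩ := Nat.exists_eq_succ_of_ne_zero hy
  simp only [g13, Nat.succ_sub_one, Nat.factorial_succ, pow_succ]
  have h1 : ((i:ℝ)+1) ≠ 0 := by positivity
  have h2 : (Nat.factorial y : ℝ) ≠ 0 := Nat.cast_ne_zero.mpr (Nat.factorial_ne_zero y)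
  push_cast
  field_simp

lemma sum_update13 {M : ℕ} {β : Type*} [AddCommMonoid β] (F : Fin M → ℕ → β)
    (y : Fin M → ℕ) (i : Fin M) (b : ℕ) :
    ∑ j, F j (Function.update y i b j) = F i b + ∑ j ∈ univ.erase i, F j (y j) := by
  rw [← Finset.add_sum_erase _ (fun j => F j (Function.update y i b j)) (mem_univ i),
    Function.update_self]
  congr 1
  exact Finset.sum_congr rfl fun j hj => by
    rw [Function.update_of_ne (Finset.ne_of_mem_erase hj)]

lemma prod_update13 {M : ℕ} (F : Fin M → ℕ → ℝ)
    (y : Fin M → ℕ) (i : Fin M) (b : ℕ) :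
    ∏ j, F j (Function.update y i b j) = F i b * ∏ j ∈ univ.erase i, F j (y j) := by
  rw [← Finset.mul_prod_erase _ (fun j => F j (Function.update y i b j)) (mem_univ i),
    Function.update_self]
  congr 1
  exact Finset.prod_congr rfl fun j hj => by
    rw [Function.update_of_ne (Finset.ne_of_mem_erase hj)]

lemma key13 (n M k : ℕ) (i : Fin M) (hik : i.1 + 1 ≤ k) :
    ∑ y ∈ B13 M k, (((i.1 : ℝ) + 1) * (y i)) * ∏ j, g13 n j.1 (y j)
      = n * S13 n M (k - (i.1 + 1)) := by
  rw [← Finset.sum_filter_of_ne (p := fun y => y i ≠ 0)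
    (fun y _ h => by
      intro h0
      apply h
      rw [h0]
      simp)]
  rw [S13, Finset.mul_sum]
  refine Finset.sum_nbij' (i := fun y => Function.update y i (y i - 1))
    (j := fun y => Function.update y i (y i + 1)) ?_ ?_ ?_ ?_ ?_
  · intro y hy
    rw [mem_filter, mem_B13] at hy
    obtain ⟨hsum, hne⟩ := hy
    rw [mem_B13, sum_update13 (fun j v => (j.1 + 1) * v)]
    rw [← Finset.add_sum_erase _ (fun j => (j.1 + 1) * y j) (mem_univ i)] at hsum
    have hmul : (i.1 + 1) * (y i - 1) + (i.1 + 1) = (i.1 + 1) * y i := by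
      obtain ⟨c, hc⟩ := Nat.exists_eq_succ_of_ne_zero hne
      rw [hc]
      simp [Nat.mul_succ]
    omega
  · intro y hy
    rw [mem_B13] at hy
    rw [mem_filter, mem_B13, sum_update13 (fun j v => (j.1 + 1) * v)]
    rw [← Finset.add_sum_erase _ (fun j => (j.1 + 1) * y j) (mem_univ i)] at hy
    constructor
    · have hmul : (i.1 + 1) * (y i + 1) = (i.1 + 1) * y i + (i.1 + 1) := Nat.mul_succ _ _
      omega
    · simp
  · intro y hy
    rw [mem_filter] at hy
    funext j
    rcases eq_or_ne j i with rfl | hne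
    · simp only [Function.update_self]
      omega
    · simp [Function.update_of_ne hne]
  · intro y _
    funext j
    rcases eq_or_ne j i with rfl | hne
    · simp [Function.update_self]
    · simp [Function.update_of_ne hne]
  · intro y hy
    rw [mem_filter] at hy
    obtain ⟨_, hne⟩ := hy
    rw [prod_update13 (fun j v => g13 n j.1 v),
      ← Finset.mul_prod_erase _ (fun j => g13 n j.1 (y j)) (mem_univ i), ← mul_assoc,
      ← mul_assoc, g13_step n i.1 (y i) hne]

lemma zero13 (n M k : ℕ) (i : Fin M) (hik : ¬ (i.1 + 1 ≤ k)) :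
    ∑ y ∈ B13 M k, (((i.1 : ℝ) + 1) * (y i)) * ∏ j, g13 n j.1 (y j) = 0 := by
  refine Finset.sum_eq_zero fun y hy => ?_
  rw [mem_B13] at hy
  have h1 : (i.1 + 1) * y i ≤ k := hy ▸ Finset.single_le_sum
    (f := fun j => (j.1 + 1) * y j) (fun _ _ => Nat.zero_le _) (mem_univ i)
  have h2 : y i = 0 := by
    by_contra h
    have : i.1 + 1 ≤ (i.1 + 1) * y i := Nat.le_mul_of_pos_right _ (Nat.pos_of_ne_zero h)
    omega
  rw [h2]
  simp

lemma S13_rec (n M k : ℕ) (hk : 1 ≤ k) (hkM : k ≤ M) :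
    (k : ℝ) * S13 n M k = n * ∑ j ∈ range k, S13 n M j := by
  have step1 : (k : ℝ) * S13 n M k
      = ∑ i : Fin M, ∑ y ∈ B13 M k, (((i.1 : ℝ) + 1) * (y i)) * ∏ j, g13 n j.1 (y j) := by
    rw [S13, Finset.mul_sum, Finset.sum_comm]
    refine Finset.sum_congr rfl fun y hy => ?_
    rw [mem_B13] at hy
    rw [← Finset.sum_mul]
    congr 1
    rw [← hy]
    push_cast
    exact Finset.sum_congr rfl fun x _ => by ring
  rw [step1]
  have step2 : ∀ i : Fin M,
      ∑ y ∈ B13 M k, (((i.1 : ℝ) + 1) * (y i)) * ∏ j, g13 n j.1 (y j)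
        = if i.1 + 1 ≤ k then n * S13 n M (k - (i.1 + 1)) else 0 := fun i => by
    by_cases hik : i.1 + 1 ≤ k
    · rw [if_pos hik, key13 n M k i hik]
    · rw [if_neg hik, zero13 n M k i hik]
  rw [Finset.sum_congr rfl fun i _ => step2 i]
  rw [Fin.sum_univ_eq_sum_range (fun j => if j + 1 ≤ k then n * S13 n M (k - (j + 1)) else 0)]
  rw [← Finset.sum_filter]
  have hfil : (range M).filter (fun j => j + 1 ≤ k) = range k := by
    ext j
    simp only [mem_filter, mem_range]
    omega
  rw [hfil]
  have : ∀ j ∈ range k, (n : ℝ) * S13 n M (k - (j + 1)) = n * S13 n M (k - 1 - j) := by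
    intro j hj
    congr 2
    omega
  rw [Finset.sum_congr rfl this, ← Finset.mul_sum,
    Finset.sum_range_reflect (fun j => S13 n M j) k]

lemma S13_zero (n M : ℕ) : S13 n M 0 = 1 := by
  have hB : B13 M 0 = {fun _ => 0} := by
    ext y
    rw [mem_B13, Finset.mem_singleton]
    constructor
    · intro h
      funext j
      have := (Finset.sum_eq_zero_iff.mp h) j (mem_univ j)
      simpa using this
    · intro h
      rw [h]
      simp
  rw [S13, hB, Finset.sum_singleton]
  exact Finset.prod_eq_one fun i _ => g13_zero n i.1

lemma hockey13 (n : ℕ) : ∀ m, ∑ k ∈ range (m + 1), (n + k).choose k = (n + m + 1).choose m := by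
  intro m
  induction m with
  | zero => simp
  | succ m ih =>
      rw [Finset.sum_range_succ, ih]
      show (n+m+1).choose m + (n+m+1).choose (m+1) = ((n+m+1)+1).choose (m+1)
      conv_rhs => rw [Nat.choose_succ_succ]

lemma choose_rec13 (n k : ℕ) (hk : 1 ≤ k) :
    k * (n + k - 1).choose k = n * ∑ j ∈ range k, (n + j - 1).choose j := by
  cases n with
  | zero =>
      simp only [Nat.zero_add, Nat.zero_mul]
      have : (k - 1).choose k = 0 := Nat.choose_eq_zero_of_lt (by omega)
      simp [this]
  | succ n =>
      obtain ⟨k', rfl⟩ := Nat.exists_eq_add_of_le hk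
      have h1 : ∀ j, (n + 1 + j - 1) = n + j := by intro j; omega
      have h2 : ∑ j ∈ range (1 + k'), (n + 1 + j - 1).choose j
          = (n + k' + 1).choose k' := by
        rw [Nat.add_comm 1 k', ← hockey13 n k']
        exact Finset.sum_congr rfl fun j _ => by rw [h1]
      rw [h2]
      have h3 : (n + 1 + (1 + k') - 1) = n + k' + 1 := by omega
      rw [h3]
      have h5 := Nat.choose_succ_right_eq (n + k' + 1) k'
      have h4 : n + k' + 1 - k' = n + 1 := by omega
      rw [h4] at h5
      calc (1 + k') * (n + k' + 1).choose (1 + k')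
          = (n + k' + 1).choose (k' + 1) * (k' + 1) := by rw [Nat.add_comm 1 k']; ring
        _ = (n + k' + 1).choose k' * (n + 1) := h5
        _ = (n + 1) * (n + k' + 1).choose k' := by ring

lemma S13_eq (n : ℕ) : ∀ k M, k ≤ M → S13 n M k = ((n + k - 1).choose k : ℝ) := by
  intro k
  induction k using Nat.strong_induction_on with
  | _ k ih =>
    intro M hkM
    rcases Nat.eq_zero_or_pos k with rfl | hk
    · rw [S13_zero]
      simp
    · have hrec := S13_rec n M k hk hkM
      have hsum : ∑ j ∈ range k, S13 n M j
          = ∑ j ∈ range k, ((n + j - 1).choose j : ℝ) :=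
        Finset.sum_congr rfl fun j hj =>
          ih j (mem_range.mp hj) M (le_trans (le_of_lt (mem_range.mp hj)) hkM)
      rw [hsum] at hrec
      have hnat := choose_rec13 n k hk
      have hcast : (n : ℝ) * ∑ j ∈ range k, ((n + j - 1).choose j : ℝ)
          = (k : ℝ) * ((n + k - 1).choose k : ℝ) := by
        exact_mod_cast hnat.symm
      rw [hcast] at hrec
      exact mul_left_cancel₀ (by exact_mod_cast hk.ne' : (k : ℝ) ≠ 0) hrec

theorem stmt_13 (m n : ℕ) :
    ∑ᶠ y ∈ {y : Fin m → ℕ | ∑ i, (i.1 + 1) * y i = m},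
        ∏ i : Fin m,
          (1 / (Nat.factorial (y i) : ℝ)) * ((n : ℝ) / (i.1 + 1 : ℝ)) ^ (y i)
      = ((n + m - 1).choose m : ℝ) := by
  have hset : {y : Fin m → ℕ | ∑ i, (i.1 + 1) * y i = m} = ↑(B13 m m) := by
    ext y
    simp [mem_B13]
  rw [hset, finsum_mem_coe_finset]
  rw [← S13_eq n m m le_rfl]
  rfl
end

section
/- For any natural numbers q ≤ n and a sequence a : ℕ → ℝ: Σ_{q ≤ N_1 ≤ N_2 ≤ N_3 ≤ N_4 ≤ n} a(N_4)a(N_3)a(N_2)a(N_1) = (1/24)S_1^4 + (1/4)S_1^2 S_2 + (1/3)S_1 S_3 + (1/8)S_2^2 + (1/4)S_4, where S_i = Σ_{N=q}^{n} a(N)^i. -/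
open Finset

private lemma lem2 (q : ℕ) (a : ℕ → ℝ) : ∀ m : ℕ,
    ∑ N2 ∈ Icc q m, a N2 * ∑ N1 ∈ Icc q N2, a N1
      = (1/2) * (∑ N ∈ Icc q m, a N)^2 + (1/2) * ∑ N ∈ Icc q m, (a N)^2 := by
  intro m
  induction m with
  | zero =>
    rcases Nat.eq_zero_or_pos q with h | h
    · subst h; simp [Finset.Icc_self]; ring
    · rw [Finset.Icc_eq_empty (by omega)]; simp
  | succ m ih =>
    rcases le_or_gt q (m+1) with h | h
    · simp only [Finset.sum_Icc_succ_top h]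
      rw [ih]
      ring
    · rw [Finset.Icc_eq_empty (by omega)]; simp

private lemma lem3 (q : ℕ) (a : ℕ → ℝ) : ∀ m : ℕ,
    ∑ N3 ∈ Icc q m, a N3 * ∑ N2 ∈ Icc q N3, a N2 * ∑ N1 ∈ Icc q N2, a N1
      = (1/6) * (∑ N ∈ Icc q m, a N)^3
        + (1/2) * (∑ N ∈ Icc q m, a N) * (∑ N ∈ Icc q m, (a N)^2)
        + (1/3) * ∑ N ∈ Icc q m, (a N)^3 := by
  intro m
  induction m with
  | zero =>
    rcases Nat.eq_zero_or_pos q with h | h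
    · subst h; simp [Finset.Icc_self]; ring
    · rw [Finset.Icc_eq_empty (by omega)]; simp
  | succ m ih =>
    rcases le_or_gt q (m+1) with h | h
    · simp only [Finset.sum_Icc_succ_top h]
      rw [ih, lem2]
      ring
    · rw [Finset.Icc_eq_empty (by omega)]; simp

theorem stmt_16 (q n : ℕ) (hqn : q ≤ n) (a : ℕ → ℝ) :
    ∑ N4 ∈ Finset.Icc q n, a N4 *
        ∑ N3 ∈ Finset.Icc q N4, a N3 *
          ∑ N2 ∈ Finset.Icc q N3, a N2 * ∑ N1 ∈ Finset.Icc q N2, a N1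
      = (1 / 24) * (∑ N ∈ Finset.Icc q n, a N) ^ 4
        + (1 / 4) * (∑ N ∈ Finset.Icc q n, a N) ^ 2 * (∑ N ∈ Finset.Icc q n, (a N) ^ 2)
        + (1 / 3) * (∑ N ∈ Finset.Icc q n, a N) * (∑ N ∈ Finset.Icc q n, (a N) ^ 3)
        + (1 / 8) * (∑ N ∈ Finset.Icc q n, (a N) ^ 2) ^ 2
        + (1 / 4) * ∑ N ∈ Finset.Icc q n, (a N) ^ 4 := by
  clear hqn
  induction n with
  | zero =>
    rcases Nat.eq_zero_or_pos q with h | h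
    · subst h; simp [Finset.Icc_self]; ring
    · rw [Finset.Icc_eq_empty (by omega)]; simp
  | succ m ih =>
    rcases le_or_gt q (m+1) with h | h
    · simp only [Finset.sum_Icc_succ_top h]

      rw [ih, lem3, lem2]
      ring
    · rw [Finset.Icc_eq_empty (by omega)]; simp
end
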